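/- Every map of flows having the right lifting property with respect to all maps of I^gl ∪ {C} belongs to W̄_DK and has the right lifting property with respect to all maps of {C⁺, c₀⁺} ∪ J^gl ∪ I^gl_{≥1}; that is, inj(I^gl ∪ {C}) ⊆ W̄_DK ∩ inj({C⁺, c₀⁺} ∪ J^gl ∪ I^gl_{≥1}). -/

import Mathlib

open CategoryTheory

noncomputable section

/-! ### Flows: small semicategories enriched in topological spaces -/

structure DFlow : Type 1 where
  States : Type
  Path : States → States → Type
  str : ∀ α β, TopologicalSpace (Path α β)
  comp : ∀ {α β γ : States}, Path α β → Path β γ → Path α γ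
  continuous_comp : ∀ α β γ, Continuous (fun p : Path α β × Path β γ => comp p.1 p.2)
  assoc : ∀ {α β γ δ : States} (x : Path α β) (y : Path β γ) (z : Path γ δ),
    comp (comp x y) z = comp x (comp y z)

attribute [instance] DFlow.str

/-- Morphisms of flows. -/
structure FlowHom (X Y : DFlow) where
  toFun : X.States → Y.States
  map : ∀ {α β : X.States}, X.Path α β → Y.Path (toFun α) (toFun β)
  continuous_map : ∀ α β : X.States, Continuous fun p : X.Path α β => map p
  map_comp : ∀ {α β γ : X.States} (x : X.Path α β) (y : X.Path β γ),
    map (X.comp x y) = Y.comp (map x) (map y)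

instance : Category DFlow where
  Hom := FlowHom
  id X := ⟨id, fun p => p, fun _ _ => continuous_id, fun _ _ => rfl⟩
  comp f g := ⟨g.toFun ∘ f.toFun, fun p => g.map (f.map p),
    fun α β => (g.continuous_map _ _).comp (f.continuous_map _ _),
    fun x y => by simp only [f.map_comp, g.map_comp]⟩

lemma continuous_of_isEmpty {X Y : Type} [TopologicalSpace X] [TopologicalSpace Y]
    (h : IsEmpty X) (f : X → Y) : Continuous f :=
  continuous_iff_continuousAt.mpr fun x => h.elim x

/-- A set viewed as a flow with empty spaces of execution paths. -/
def DFlow.ofSet (S : Type) : DFlow where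
  States := S
  Path _ _ := Empty
  str _ _ := ⊥
  comp x _ := x.elim
  continuous_comp _ _ _ := continuous_of_isEmpty (inferInstanceAs (IsEmpty (Empty × Empty))) _
  assoc x _ _ := x.elim

/-- The empty flow. -/
def emptyFlow : DFlow := DFlow.ofSet Empty

/-- The flow `{0}` with one state and no execution path. -/
def pointFlow : DFlow := DFlow.ofSet PUnit

/-- The flow `{0, 1}` with two states and no execution path. -/
def twoFlow : DFlow := DFlow.ofSet Bool

/-- The terminal flow. -/
def terminalFlow : DFlow where
  States := PUnit
  Path _ _ := PUnit
  str _ _ := ⊥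
  comp _ _ := PUnit.unit
  continuous_comp _ _ _ := continuous_const
  assoc _ _ _ := rfl

/-- The map of flows `C : ∅ → {0}`. -/
def Cmap : emptyFlow ⟶ pointFlow :=
  ⟨fun x => x.elim, fun {α} _ _ => α.elim, fun α _ => α.elim, fun {α} _ _ _ _ => α.elim⟩

/-- The map of flows `R : {0,1} → {0}`. -/
def Rmap : twoFlow ⟶ pointFlow :=
  ⟨fun _ => PUnit.unit, fun p => p.elim, fun _ _ => @continuous_of_isEmpty _ _ (DFlow.str _ _ _) (DFlow.str _ _ _) (inferInstanceAs (IsEmpty Empty)) _, fun x _ => x.elim⟩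

/-- The map of flows `C⁺ : {0} → {0,1}`. -/
def Cplus : pointFlow ⟶ twoFlow :=
  ⟨fun _ => false, fun p => p.elim, fun _ _ => @continuous_of_isEmpty _ _ (DFlow.str _ _ _) (DFlow.str _ _ _) (inferInstanceAs (IsEmpty Empty)) _, fun x _ => x.elim⟩

/-- The canonical map from the empty flow. -/
def DFlow.fromEmpty (X : DFlow) : emptyFlow ⟶ X :=
  ⟨fun x => x.elim, fun {α} _ => α.elim, fun α _ => α.elim, fun {α} _ _ _ _ => α.elim⟩

/-- The canonical map to the terminal flow. -/
def DFlow.toTerminal (X : DFlow) : X ⟶ terminalFlow :=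
  ⟨fun _ => PUnit.unit, fun _ => PUnit.unit, fun α β => @continuous_const (X.Path α β) (terminalFlow.Path PUnit.unit PUnit.unit) (X.str α β) (terminalFlow.str PUnit.unit PUnit.unit) PUnit.unit, fun _ _ => rfl⟩

/-! ### Globes -/

/-- The path spaces of the globe `Glob(Z)`. -/
def GlobPath (Z : Type) : Bool → Bool → Type
  | false, true => Z
  | _, _ => Empty

instance globPathTop (Z : Type) [TopologicalSpace Z] :
    ∀ a b, TopologicalSpace (GlobPath Z a b)
  | false, true => inferInstanceAs (TopologicalSpace Z)
  | false, false => ⊥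
  | true, false => ⊥
  | true, true => ⊥

instance globPathIsEmpty (Z : Type) : ∀ (a : Bool), IsEmpty (GlobPath Z a a)
  | false => inferInstanceAs (IsEmpty Empty)
  | true => inferInstanceAs (IsEmpty Empty)

/-- The globe of a topological space. -/
def DFlow.glob (Z : Type) [TopologicalSpace Z] : DFlow where
  States := Bool
  Path := GlobPath Z
  str := globPathTop Z
  comp {a b c} x y :=
    match a, b, c, x, y with
    | false, false, _, x, _ => x.elim
    | false, true, false, _, y => y.elim
    | false, true, true, _, y => y.elim
    | true, false, _, x, _ => x.elim
    | true, true, _, x, _ => x.elim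
  continuous_comp a b c :=
    match a, b, c with
    | false, false, false => continuous_of_isEmpty ⟨fun p => p.1.elim⟩ _
    | false, false, true => continuous_of_isEmpty ⟨fun p => p.1.elim⟩ _
    | false, true, false => continuous_of_isEmpty ⟨fun p => p.2.elim⟩ _
    | false, true, true => continuous_of_isEmpty ⟨fun p => p.2.elim⟩ _
    | true, false, false => continuous_of_isEmpty ⟨fun p => p.1.elim⟩ _
    | true, false, true => continuous_of_isEmpty ⟨fun p => p.1.elim⟩ _
    | true, true, false => continuous_of_isEmpty ⟨fun p => p.1.elim⟩ _
    | true, true, true => continuous_of_isEmpty ⟨fun p => p.1.elim⟩ _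
  assoc {a b c d} x y z :=
    match a, b, c, d, x, y, z with
    | false, false, _, _, x, _, _ => x.elim
    | false, true, false, _, _, y, _ => y.elim
    | false, true, true, false, _, y, _ => y.elim
    | false, true, true, true, _, y, _ => y.elim
    | true, _, _, _, x, _, _ => x.elim

/-- The functorial action of `Glob` on a continuous map. -/
def DFlow.globMap {Z W : Type} [TopologicalSpace Z] [TopologicalSpace W] (f : Z → W)
    (hf : Continuous f) : DFlow.glob Z ⟶ DFlow.glob W where
  toFun := id
  map {a b} x :=
    match a, b, x with
    | false, true, x => f x
    | false, false, x => x.elim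
    | true, false, x => x.elim
    | true, true, x => x.elim
  continuous_map a b :=
    match a, b with
    | false, true => hf
    | false, false => @continuous_of_isEmpty _ _ (DFlow.str _ _ _) (DFlow.str _ _ _) (inferInstanceAs (IsEmpty Empty)) _
    | true, false => @continuous_of_isEmpty _ _ (DFlow.str _ _ _) (DFlow.str _ _ _) (inferInstanceAs (IsEmpty Empty)) _
    | true, true => @continuous_of_isEmpty _ _ (DFlow.str _ _ _) (DFlow.str _ _ _) (inferInstanceAs (IsEmpty Empty)) _
  map_comp {a b c} x y :=
    match a, b, c, x, y with
    | false, false, _, x, _ => x.elim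
    | false, true, false, _, y => y.elim
    | false, true, true, _, y => y.elim
    | true, _, _, x, _ => x.elim

/-- The directed segment, the globe of a one-point space. -/
def Iseg : DFlow := DFlow.glob PUnit

/-! ### Disks and spheres -/

/-- The `n`-dimensional disk `D^n`. -/
def gDisk (n : ℕ) : Type := (Metric.closedBall (0 : EuclideanSpace ℝ (Fin n)) 1 : Set _)

/-- The sphere `S^{n-1}`, boundary of the `n`-dimensional disk. -/
def gSphere (n : ℕ) : Type := (Metric.sphere (0 : EuclideanSpace ℝ (Fin n)) 1 : Set _)

instance (n : ℕ) : TopologicalSpace (gDisk n) :=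
  inferInstanceAs (TopologicalSpace (Metric.closedBall (0 : EuclideanSpace ℝ (Fin n)) 1))

instance (n : ℕ) : TopologicalSpace (gSphere n) :=
  inferInstanceAs (TopologicalSpace (Metric.sphere (0 : EuclideanSpace ℝ (Fin n)) 1))

/-- The inclusion `S^{n-1} ⊆ D^n`. -/
def sphereIncl (n : ℕ) : gSphere n → gDisk n :=
  fun x => ⟨x.1, Metric.sphere_subset_closedBall x.2⟩

lemma continuous_sphereIncl (n : ℕ) : Continuous (sphereIncl n) :=
  Continuous.subtype_mk continuous_subtype_val _

/-- The generating cofibration `c_n : Glob(S^{n-1}) → Glob(D^n)`. -/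
def cFlow (n : ℕ) : DFlow.glob (gSphere n) ⟶ DFlow.glob (gDisk n) :=
  DFlow.globMap (sphereIncl n) (continuous_sphereIncl n)

/-- `{0}` as a subspace of `ℝ`. -/
def zeroSpace : Type := ({(0 : ℝ)} : Set ℝ)

instance : TopologicalSpace zeroSpace := inferInstanceAs (TopologicalSpace ({(0:ℝ)} : Set ℝ))

/-- The inclusion `D^n × {0} → D^n × [0,1]`. -/
def cylIncl (n : ℕ) : gDisk n × zeroSpace → gDisk n × unitInterval :=
  fun p => (p.1, ⟨p.2.1, by
    rcases p.2 with ⟨x, hx⟩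
    simp only [Set.mem_singleton_iff] at hx
    subst hx
    exact unitInterval.zero_mem⟩)

lemma continuous_cylIncl (n : ℕ) : Continuous (cylIncl n) :=
  continuous_fst.prodMk (Continuous.subtype_mk (continuous_subtype_val.comp continuous_snd) _)

/-- The generating trivial cofibration `Glob(D^n × {0}) → Glob(D^n × [0,1])`. -/
def jFlow (n : ℕ) : DFlow.glob (gDisk n × zeroSpace) ⟶ DFlow.glob (gDisk n × unitInterval) :=
  DFlow.globMap (cylIncl n) (continuous_cylIncl n)

/-! ### Generating sets of maps, as morphism properties -/

/-- The set `I^gl = {c_n : Glob(S^{n-1}) → Glob(D^n) | n ≥ 0}`. -/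
def Igl : MorphismProperty DFlow := fun X Y f =>
  ∃ n : ℕ, X = DFlow.glob (gSphere n) ∧ Y = DFlow.glob (gDisk n) ∧ HEq f (cFlow n)

/-- The set `I^gl_{≥1} = {c_n | n ≥ 1}`. -/
def IglGeOne : MorphismProperty DFlow := fun X Y f =>
  ∃ n : ℕ, 1 ≤ n ∧ X = DFlow.glob (gSphere n) ∧ Y = DFlow.glob (gDisk n) ∧ HEq f (cFlow n)

/-- The set `J^gl`. -/
def Jgl : MorphismProperty DFlow := fun X Y f =>
  ∃ n : ℕ, X = DFlow.glob (gDisk n × zeroSpace) ∧ Y = DFlow.glob (gDisk n × unitInterval) ∧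
    HEq f (jFlow n)

/-- The singleton `{C}`. -/
def Cprop : MorphismProperty DFlow := fun X Y f =>
  X = emptyFlow ∧ Y = pointFlow ∧ HEq f Cmap

/-- The singleton `{R}`. -/
def Rprop : MorphismProperty DFlow := fun X Y f =>
  X = twoFlow ∧ Y = pointFlow ∧ HEq f Rmap

/-- The set `I^gl ∪ {C}`. -/
def IglC : MorphismProperty DFlow := fun _ _ f => Igl f ∨ Cprop f

/-- The set `I^gl ∪ {C, R}`, generating cofibrations of the q-model structure. -/
def IglCR : MorphismProperty DFlow := fun _ _ f => Igl f ∨ Cprop f ∨ Rprop f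

/-! ### Lifting properties, cofibration and injectivity classes -/

/-- `rlpClass S` is `inj(S)`: maps with the RLP with respect to every map of `S`. -/
def rlpClass {M : Type _} [Category M] (S : MorphismProperty M) : MorphismProperty M :=
  fun _ _ p => ∀ {A B : M} (i : A ⟶ B), S i → HasLiftingProperty i p

/-- `llpClass S`: maps with the LLP with respect to every map of `S`. -/
def llpClass {M : Type _} [Category M] (S : MorphismProperty M) : MorphismProperty M :=
  fun _ _ i => ∀ {A B : M} (p : A ⟶ B), S p → HasLiftingProperty i p

/-- `cofClass S` is `cof(S) = llp(inj(S))`. -/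
def cofClass {M : Type _} [Category M] (S : MorphismProperty M) : MorphismProperty M :=
  llpClass (rlpClass S)

/-! ### Model structures -/

/-- A model structure on a category, specified by its weak equivalences,
cofibrations and fibrations. -/
structure ModelStructure (M : Type _) [Category M] where
  W : MorphismProperty M
  C : MorphismProperty M
  F : MorphismProperty M
  w_comp : ∀ {X Y Z : M} (f : X ⟶ Y) (g : Y ⟶ Z), W f → W g → W (f ≫ g)
  w_cancel_left : ∀ {X Y Z : M} (f : X ⟶ Y) (g : Y ⟶ Z), W f → W (f ≫ g) → W g
  w_cancel_right : ∀ {X Y Z : M} (f : X ⟶ Y) (g : Y ⟶ Z), W g → W (f ≫ g) → W f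
  w_retract : ∀ {X Y X' Y' : M} (f : X ⟶ Y) (g : X' ⟶ Y') (iX : X ⟶ X') (rX : X' ⟶ X)
    (iY : Y ⟶ Y') (rY : Y' ⟶ Y), iX ≫ rX = 𝟙 X → iY ≫ rY = 𝟙 Y →
    iX ≫ g = f ≫ iY → g ≫ rY = rX ≫ f → W g → W f
  cof_eq : C = llpClass (fun _ _ p => F p ∧ W p)
  fib_eq : F = rlpClass (fun _ _ i => C i ∧ W i)
  factor_triv_cof : ∀ {X Y : M} (f : X ⟶ Y),
    ∃ (Z : M) (i : X ⟶ Z) (p : Z ⟶ Y), C i ∧ W i ∧ F p ∧ i ≫ p = f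
  factor_triv_fib : ∀ {X Y : M} (f : X ⟶ Y),
    ∃ (Z : M) (i : X ⟶ Z) (p : Z ⟶ Y), C i ∧ F p ∧ W p ∧ i ≫ p = f

/-! ### The class of weak equivalences `W̄_DK` -/

/-- A flow "is a set": it has no execution path. -/
def DFlow.IsSetFlow (X : DFlow) : Prop := ∀ α β : X.States, IsEmpty (X.Path α β)

/-- A flow has at least one execution path. -/
def DFlow.HasExecPath (X : DFlow) : Prop := ∃ α β : X.States, Nonempty (X.Path α β)

/-- The class `W̄_DK` of maps of flows. -/
def WbarDK : MorphismProperty DFlow := fun X Y _ =>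
  (IsEmpty X.States ∧ IsEmpty Y.States) ∨
  (Nonempty X.States ∧ Nonempty Y.States ∧ X.IsSetFlow ∧ Y.IsSetFlow) ∨
  (X.HasExecPath ∧ Y.HasExecPath)

/-! ### Binary coproducts of flows -/

/-- Path spaces of the coproduct of two flows. -/
def SumPath (X Y : DFlow) : X.States ⊕ Y.States → X.States ⊕ Y.States → Type
  | .inl a, .inl b => X.Path a b
  | .inr a, .inr b => Y.Path a b
  | _, _ => Empty

instance sumPathTop (X Y : DFlow) : ∀ a b, TopologicalSpace (SumPath X Y a b)
  | .inl a, .inl b => inferInstanceAs (TopologicalSpace (X.Path a b))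
  | .inr a, .inr b => inferInstanceAs (TopologicalSpace (Y.Path a b))
  | .inl _, .inr _ => ⊥
  | .inr _, .inl _ => ⊥

/-- The coproduct of two flows. -/
def DFlow.sum (X Y : DFlow) : DFlow where
  States := X.States ⊕ Y.States
  Path := SumPath X Y
  str := sumPathTop X Y
  comp {a b c} x y :=
    match a, b, c, x, y with
    | .inl _, .inl _, .inl _, x, y => X.comp x y
    | .inr _, .inr _, .inr _, x, y => Y.comp x y
    | .inl _, .inl _, .inr _, _, y => y.elim
    | .inl _, .inr _, _, x, _ => x.elim
    | .inr _, .inl _, _, x, _ => x.elim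
    | .inr _, .inr _, .inl _, _, y => y.elim
  continuous_comp a b c :=
    match a, b, c with
    | .inl _, .inl _, .inl _ => X.continuous_comp _ _ _
    | .inr _, .inr _, .inr _ => Y.continuous_comp _ _ _
    | .inl _, .inl _, .inr _ => continuous_of_isEmpty ⟨fun p => p.2.elim⟩ _
    | .inl _, .inr _, _ => continuous_of_isEmpty ⟨fun p => p.1.elim⟩ _
    | .inr _, .inl _, _ => continuous_of_isEmpty ⟨fun p => p.1.elim⟩ _
    | .inr _, .inr _, .inl _ => continuous_of_isEmpty ⟨fun p => p.2.elim⟩ _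
  assoc {a b c d} x y z :=
    match a, b, c, d, x, y, z with
    | .inl _, .inl _, .inl _, .inl _, x, y, z => X.assoc x y z
    | .inr _, .inr _, .inr _, .inr _, x, y, z => Y.assoc x y z
    | .inl _, .inl _, .inl _, .inr _, _, _, z => z.elim
    | .inl _, .inl _, .inr _, _, _, y, _ => y.elim
    | .inl _, .inr _, _, _, x, _, _ => x.elim
    | .inr _, .inl _, _, _, x, _, _ => x.elim
    | .inr _, .inr _, .inl _, _, _, y, _ => y.elim
    | .inr _, .inr _, .inr _, .inl _, _, _, z => z.elim

/-- The coproduct of two maps of flows. -/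
def DFlow.sumMap {X X' Y Y' : DFlow} (f : X ⟶ X') (g : Y ⟶ Y') : X.sum Y ⟶ X'.sum Y' where
  toFun := Sum.map f.toFun g.toFun
  map {a b} x :=
    match a, b, x with
    | .inl _, .inl _, x => f.map x
    | .inr _, .inr _, x => g.map x
    | .inl _, .inr _, x => x.elim
    | .inr _, .inl _, x => x.elim
  continuous_map a b :=
    match a, b with
    | .inl _, .inl _ => f.continuous_map _ _
    | .inr _, .inr _ => g.continuous_map _ _
    | .inl _, .inr _ => @continuous_of_isEmpty _ _ (DFlow.str _ _ _) (DFlow.str _ _ _) (inferInstanceAs (IsEmpty Empty)) _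
    | .inr _, .inl _ => @continuous_of_isEmpty _ _ (DFlow.str _ _ _) (DFlow.str _ _ _) (inferInstanceAs (IsEmpty Empty)) _
  map_comp {a b c} x y :=
    match a, b, c, x, y with
    | .inl _, .inl _, .inl _, x, y => f.map_comp x y
    | .inr _, .inr _, .inr _, x, y => g.map_comp x y
    | .inl _, .inl _, .inr _, _, y => y.elim
    | .inl _, .inr _, _, x, _ => x.elim
    | .inr _, .inl _, _, x, _ => x.elim
    | .inr _, .inr _, .inl _, _, y => y.elim

/-- The map `c₀⁺ = id_{I⃗} ⊔ c₀ : I⃗ ⊔ Glob(S^{-1}) → I⃗ ⊔ Glob(D⁰)`. -/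
def cZeroPlus : Iseg.sum (DFlow.glob (gSphere 0)) ⟶ Iseg.sum (DFlow.glob (gDisk 0)) :=
  DFlow.sumMap (𝟙 Iseg) (cFlow 0)

/-- The singleton `{C⁺}`. -/
def CplusProp : MorphismProperty DFlow := fun X Y f =>
  X = pointFlow ∧ Y = twoFlow ∧ HEq f Cplus

/-- The singleton `{c₀⁺}`. -/
def cZeroPlusProp : MorphismProperty DFlow := fun X Y f =>
  X = Iseg.sum (DFlow.glob (gSphere 0)) ∧ Y = Iseg.sum (DFlow.glob (gDisk 0)) ∧ HEq f cZeroPlus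

/-- The set `{C⁺, c₀⁺} ∪ J^gl ∪ I^gl_{≥1}`. -/
def TrivCofGen : MorphismProperty DFlow := fun _ _ f =>
  CplusProp f ∨ cZeroPlusProp f ∨ Jgl f ∨ IglGeOne f

section Aux

lemma FlowHom.ext' {X Y : DFlow} {h k : FlowHom X Y}
    (h1 : ∀ s, h.toFun s = k.toFun s)
    (h2 : ∀ (a b : X.States) (p : X.Path a b), HEq (h.map p) (k.map p)) : h = k := by
  cases h with | mk t m c mc =>
  cases k with | mk t' m' c' mc' =>
  have ht : t = t' := funext h1
  subst ht
  have hm : @m = @m' := funext fun a => funext fun b => funext fun p => eq_of_heq (h2 a b p)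
  subst hm
  rfl

lemma FlowHom.congr_toFun {X Y : DFlow} {h k : FlowHom X Y} (e : h = k) :
    ∀ s, h.toFun s = k.toFun s := by subst e; exact fun _ => rfl

lemma FlowHom.congr_map {X Y : DFlow} {h k : FlowHom X Y} (e : h = k) :
    ∀ (a b : X.States) (p : X.Path a b), HEq (h.map p) (k.map p) := by
  subst e; exact fun _ _ _ => HEq.rfl

lemma comp_toFun {X Y Z : DFlow} (h : X ⟶ Y) (k : Y ⟶ Z) (s : X.States) :
    (h ≫ k).toFun s = k.toFun (h.toFun s) := rfl

lemma comp_map {X Y Z : DFlow} (h : X ⟶ Y) (k : Y ⟶ Z) {a b : X.States} (p : X.Path a b) :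
    (h ≫ k).map p = k.map (h.map p) := rfl

end Aux
section TopLift

/-- Topological right lifting property of `p` with respect to `g`. -/
def TopLift {Z W E B : Type} [TopologicalSpace Z] [TopologicalSpace W]
    [TopologicalSpace E] [TopologicalSpace B] (g : Z → W) (p : E → B) : Prop :=
  ∀ (u : Z → E) (v : W → B), Continuous u → Continuous v → (∀ z, p (u z) = v (g z)) →
    ∃ w : W → E, Continuous w ∧ (∀ z, w (g z) = u z) ∧ (∀ x, p (w x) = v x)

/-- `TopLift` is stable under retracts of the left map. -/
lemma TopLift.of_retract {Z W Z' W' E B : Type}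
    [TopologicalSpace Z] [TopologicalSpace W] [TopologicalSpace Z'] [TopologicalSpace W']
    [TopologicalSpace E] [TopologicalSpace B]
    {g : Z → W} {g' : Z' → W'} {p : E → B}
    (s : Z → Z') (r : Z' → Z) (S : W → W') (R : W' → W)
    (hs : Continuous s) (hr : Continuous r) (hS : Continuous S) (hR : Continuous R)
    (hrs : ∀ z, r (s z) = z) (hRS : ∀ x, R (S x) = x)
    (hsq1 : ∀ z, S (g z) = g' (s z)) (hsq2 : ∀ z', R (g' z') = g (r z'))
    (H : TopLift g' p) : TopLift g p := by
  intro u v hu hv hcomm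
  obtain ⟨w', hw', hw'1, hw'2⟩ := H (u ∘ r) (v ∘ R) (hu.comp hr) (hv.comp hR)
    (fun z' => by simp only [Function.comp_apply, hcomm, hsq2])
  refine ⟨w' ∘ S, hw'.comp hS, fun z => ?_, fun x => ?_⟩
  · simp only [Function.comp_apply, hsq1, hw'1, hrs]
  · simp only [Function.comp_apply, hw'2, Function.comp_apply, hRS]

/-- Build a flow morphism out of a globe. -/
def DFlow.globTo {Z : Type} [TopologicalSpace Z] {X : DFlow} (a b : X.States)
    (φ : Z → X.Path a b) (hφ : Continuous φ) : DFlow.glob Z ⟶ X where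
  toFun := fun s => cond s b a
  map {α β} p :=
    match α, β, p with
    | false, true, p => φ p
    | false, false, p => p.elim
    | true, false, p => p.elim
    | true, true, p => p.elim
  continuous_map α β :=
    match α, β with
    | false, true => hφ
    | false, false => @continuous_of_isEmpty _ _ (DFlow.str _ _ _) (DFlow.str _ _ _) (inferInstanceAs (IsEmpty Empty)) _
    | true, false => @continuous_of_isEmpty _ _ (DFlow.str _ _ _) (DFlow.str _ _ _) (inferInstanceAs (IsEmpty Empty)) _
    | true, true => @continuous_of_isEmpty _ _ (DFlow.str _ _ _) (DFlow.str _ _ _) (inferInstanceAs (IsEmpty Empty)) _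
  map_comp {α β γ} x y :=
    match α, β, γ, x, y with
    | false, false, _, x, _ => x.elim
    | false, true, false, _, y => y.elim
    | false, true, true, _, y => y.elim
    | true, _, _, x, _ => x.elim

/-- The map on path spaces induced by a flow morphism out of a globe,
after identifying the states. -/
lemma glob_lift_exists {Z W : Type} [TopologicalSpace Z] [TopologicalSpace W]
    {g : Z → W} {hg : Continuous g} {X Y : DFlow} {f : X ⟶ Y}
    (hlift : HasLiftingProperty (DFlow.globMap g hg) f) (a b : X.States)
    : TopLift g (fun p : X.Path a b => f.map p) := by
  intro φ ψ hφ hψ hcomm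
  have sq : CommSq (DFlow.globTo a b φ hφ) (DFlow.globMap g hg) f
      (DFlow.globTo (f.toFun a) (f.toFun b) ψ hψ) := by
    constructor
    apply FlowHom.ext'
    · intro s; cases s <;> rfl
    · intro α β p
      match α, β, p with
      | false, true, p => exact heq_of_eq (hcomm p)
      | false, false, p => exact p.elim
      | true, false, p => exact p.elim
      | true, true, p => exact p.elim
  obtain ⟨⟨l⟩⟩ := hlift.sq_hasLift sq
  obtain ⟨L, fl, fr⟩ := l
  clear sq
  have ha : L.toFun false = a := FlowHom.congr_toFun fl false
  have hb : L.toFun true = b := FlowHom.congr_toFun fl true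
  subst ha; subst hb
  refine ⟨fun x => L.map (show GlobPath W false true from x), L.continuous_map false true,
    fun z => ?_, fun x => ?_⟩
  · exact eq_of_heq (FlowHom.congr_map fl false true z)
  · exact eq_of_heq (FlowHom.congr_map fr false true x)

end TopLift
section LemmaA

/-- Transport of a path along equalities of states. -/
def pathCast {Y : DFlow} {a b c d : Y.States} (h1 : a = c) (h2 : b = d)
    (p : Y.Path a b) : Y.Path c d := h1 ▸ h2 ▸ p

lemma pathCast_heq {Y : DFlow} {a b c d : Y.States} (h1 : a = c) (h2 : b = d)
    (p : Y.Path a b) : HEq (pathCast h1 h2 p) p := by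
  subst h1; subst h2; rfl

lemma pathCast_continuous {Y : DFlow} {a b c d : Y.States} (h1 : a = c) (h2 : b = d) :
    Continuous (pathCast h1 h2 (Y := Y)) := by
  subst h1; subst h2; exact continuous_id

lemma hasLiftingProperty_globMap {Z W : Type} [TopologicalSpace Z] [TopologicalSpace W]
    {g : Z → W} {hg : Continuous g} {X Y : DFlow} {f : X ⟶ Y}
    (H : ∀ a b : X.States, TopLift g (fun p : X.Path a b => f.map p)) :
    HasLiftingProperty (DFlow.globMap g hg) f := by
  constructor
  intro top bottom sq
  set a := top.toFun false with ha
  set b := top.toFun true with hb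
  have e0 : f.toFun a = bottom.toFun false := FlowHom.congr_toFun sq.w false
  have e1 : f.toFun b = bottom.toFun true := FlowHom.congr_toFun sq.w true
  set φ : Z → X.Path a b := fun z => top.map (show GlobPath Z false true from z) with hφdef
  set ψ : W → Y.Path (f.toFun a) (f.toFun b) :=
    fun x => pathCast e0.symm e1.symm (bottom.map (show GlobPath W false true from x)) with hψdef
  obtain ⟨w, hwc, hw1, hw2⟩ := H a b φ ψ (top.continuous_map false true)
    ((pathCast_continuous e0.symm e1.symm).comp (bottom.continuous_map false true))
    (fun z => by
      have h := FlowHom.congr_map sq.w false true (show GlobPath Z false true from z)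
      exact eq_of_heq (h.trans (pathCast_heq e0.symm e1.symm _).symm))
  constructor; constructor
  refine ⟨DFlow.globTo a b w hwc, ?_, ?_⟩
  · apply FlowHom.ext'
    · intro s; cases s <;> rfl
    · intro α β p
      match α, β, p with
      | false, true, p => exact heq_of_eq (hw1 p)
      | false, false, p => exact p.elim
      | true, false, p => exact p.elim
      | true, true, p => exact p.elim
  · apply FlowHom.ext'
    · intro s; cases s
      · exact e0
      · exact e1
    · intro α β p
      match α, β, p with
      | false, true, p =>
        exact (heq_of_eq (hw2 p)).trans (pathCast_heq e0.symm e1.symm _)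
      | false, false, p => exact p.elim
      | true, false, p => exact p.elim
      | true, true, p => exact p.elim

end LemmaA
section Geometry

open scoped RealInnerProductSpace

/-- Append a coordinate to a Euclidean vector. -/
def esnoc {n : ℕ} (x : EuclideanSpace ℝ (Fin n)) (t : ℝ) : EuclideanSpace ℝ (Fin (n+1)) :=
  (WithLp.equiv 2 _).symm (Fin.snoc ((WithLp.equiv 2 _) x) t)

/-- Forget the last coordinate of a Euclidean vector. -/
def einit {n : ℕ} (z : EuclideanSpace ℝ (Fin (n+1))) : EuclideanSpace ℝ (Fin n) :=
  (WithLp.equiv 2 _).symm (Fin.init ((WithLp.equiv 2 _) z))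

/-- Last coordinate. -/
def elast {n : ℕ} (z : EuclideanSpace ℝ (Fin (n+1))) : ℝ :=
  (WithLp.equiv 2 _) z (Fin.last n)

lemma continuous_esnoc {n : ℕ} :
    Continuous (fun p : EuclideanSpace ℝ (Fin n) × ℝ => esnoc p.1 p.2) := by
  apply (PiLp.continuous_toLp 2 (fun _ : Fin (n+1) => ℝ)).comp
  apply continuous_pi
  intro i
  refine Fin.lastCases ?_ ?_ i
  · simp only [Fin.snoc_last]
    exact continuous_snd
  · intro j
    simp only [Fin.snoc_castSucc]
    exact (continuous_apply j).comp ((PiLp.continuous_ofLp 2 _).comp continuous_fst)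

lemma continuous_einit {n : ℕ} : Continuous (einit (n := n)) := by
  apply (PiLp.continuous_toLp 2 (fun _ : Fin n => ℝ)).comp
  apply continuous_pi
  intro j
  exact (continuous_apply _).comp (PiLp.continuous_ofLp 2 _)

lemma einit_esnoc {n : ℕ} (x : EuclideanSpace ℝ (Fin n)) (t : ℝ) : einit (esnoc x t) = x := by
  unfold einit esnoc
  simp only [Equiv.apply_symm_apply]
  rw [Fin.init_snoc]
  exact (WithLp.equiv 2 _).symm_apply_apply x

lemma esnoc_einit {n : ℕ} (z : EuclideanSpace ℝ (Fin (n+1))) : esnoc (einit z) (elast z) = z := by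
  unfold einit esnoc elast
  simp only [Equiv.apply_symm_apply]
  rw [Fin.snoc_init_self]
  exact (WithLp.equiv 2 _).symm_apply_apply z

lemma einit_smul {n : ℕ} (c : ℝ) (z : EuclideanSpace ℝ (Fin (n+1))) :
    einit (c • z) = c • einit z := rfl

lemma norm_esnoc_sq {n : ℕ} (x : EuclideanSpace ℝ (Fin n)) (t : ℝ) :
    ‖esnoc x t‖ ^ 2 = ‖x‖ ^ 2 + t ^ 2 := by
  rw [EuclideanSpace.norm_eq, EuclideanSpace.norm_eq,
    Real.sq_sqrt (by positivity), Real.sq_sqrt (by positivity)]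
  rw [Fin.sum_univ_castSucc]
  congr 1
  · apply Finset.sum_congr rfl
    intro j _
    congr 1
    show ‖(Fin.snoc ((WithLp.equiv 2 _) x) t : Fin (n+1) → ℝ) (Fin.castSucc j)‖ = _
    rw [Fin.snoc_castSucc]
    rfl
  · show ‖(Fin.snoc ((WithLp.equiv 2 _) x) t : Fin (n+1) → ℝ) (Fin.last n)‖ ^ 2 = t ^ 2
    rw [Fin.snoc_last, Real.norm_eq_abs, sq_abs]

lemma norm_einit_le {n : ℕ} (z : EuclideanSpace ℝ (Fin (n+1))) : ‖einit z‖ ≤ ‖z‖ := by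
  have h := norm_esnoc_sq (einit z) (elast z)
  rw [esnoc_einit] at h
  have h2 : ‖einit z‖ ^ 2 ≤ ‖z‖ ^ 2 := by nlinarith [sq_nonneg (elast z)]
  calc ‖einit z‖ = Real.sqrt (‖einit z‖ ^ 2) := (Real.sqrt_sq (norm_nonneg _)).symm
    _ ≤ Real.sqrt (‖z‖ ^ 2) := Real.sqrt_le_sqrt h2
    _ = ‖z‖ := Real.sqrt_sq (norm_nonneg _)

end Geometry
section Retract

lemma gDisk_norm_le {n : ℕ} (x : gDisk n) : ‖x.1‖ ≤ 1 := by
  have := x.2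
  rwa [Metric.mem_closedBall, dist_zero_right] at this

lemma gSphere_norm_eq {n : ℕ} (z : gSphere n) : ‖z.1‖ = 1 := by
  have := z.2
  rwa [Metric.mem_sphere, dist_zero_right] at this

/-- The point of the lower hemisphere over `x`. -/
def hemi {n : ℕ} (x : gDisk n) : EuclideanSpace ℝ (Fin (n+1)) :=
  esnoc x.1 (-Real.sqrt (1 - ‖x.1‖ ^ 2))

lemma norm_hemi {n : ℕ} (x : gDisk n) : ‖hemi x‖ = 1 := by
  have hx : ‖x.1‖ ^ 2 ≤ 1 := by nlinarith [gDisk_norm_le x, norm_nonneg x.1]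
  have h : ‖hemi x‖ ^ 2 = 1 := by
    rw [hemi, norm_esnoc_sq, neg_pow, Real.sq_sqrt (by linarith)]
    ring
  nlinarith [norm_nonneg (hemi x)]

lemma continuous_hemi {n : ℕ} : Continuous (hemi (n := n)) := by
  have h : Continuous fun x : gDisk n =>
      ((x.1, -Real.sqrt (1 - ‖x.1‖ ^ 2)) : EuclideanSpace ℝ (Fin n) × ℝ) :=
    Continuous.prodMk continuous_subtype_val
      ((Real.continuous_sqrt.comp (by continuity)).neg)
  exact continuous_esnoc.comp h

/-- Clamp a vector into the closed unit ball. -/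
def clampBall {n : ℕ} (w : EuclideanSpace ℝ (Fin n)) : gDisk n :=
  ⟨(max 1 ‖w‖)⁻¹ • w, by
    rw [Metric.mem_closedBall, dist_zero_right, norm_smul, norm_inv, Real.norm_eq_abs,
      abs_of_nonneg (le_trans zero_le_one (le_max_left _ _))]
    rw [inv_mul_le_one₀ (lt_of_lt_of_le one_pos (le_max_left _ _))]
    · exact le_max_right _ _⟩

lemma clampBall_of_le {n : ℕ} (w : EuclideanSpace ℝ (Fin n)) (h : ‖w‖ ≤ 1) :
    (clampBall w).1 = w := by
  simp only [clampBall, max_eq_left h, inv_one, one_smul]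

lemma continuous_clampBall {n : ℕ} :
    Continuous (fun w : EuclideanSpace ℝ (Fin n) => (clampBall w).1) := by
  show Continuous fun w : EuclideanSpace ℝ (Fin n) => (max 1 ‖w‖)⁻¹ • w
  apply Continuous.fun_smul
  · exact (continuous_const.max continuous_norm).inv₀
      (fun w => ne_of_gt (lt_of_lt_of_le one_pos (le_max_left _ _)))
  · exact continuous_id

/-- `s`: embed the disk as the lower hemisphere of the sphere. -/
def smapR (n : ℕ) : gDisk n × zeroSpace → gSphere (n+1) :=
  fun p => ⟨hemi p.1, by rw [Metric.mem_sphere, dist_zero_right]; exact norm_hemi p.1⟩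

/-- `r`: project the sphere onto the disk. -/
def rmapR (n : ℕ) : gSphere (n+1) → gDisk n × zeroSpace :=
  fun z => (⟨einit z.1, by
      rw [Metric.mem_closedBall, dist_zero_right]
      exact (norm_einit_le z.1).trans (le_of_eq (gSphere_norm_eq z))⟩,
    ⟨0, rfl⟩)

/-- `S`: embed the cylinder into the ball. -/
def SmapR (n : ℕ) : gDisk n × unitInterval → gDisk (n+1) :=
  fun p => ⟨(1 - p.2.1 / 2) • hemi p.1, by
    rw [Metric.mem_closedBall, dist_zero_right, norm_smul, norm_hemi, mul_one,
      Real.norm_eq_abs, abs_of_nonneg (by linarith [p.2.2.2])]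
    linarith [p.2.2.1]⟩

/-- The vertical coordinate of the retraction. -/
def tauR {n : ℕ} (z : gDisk (n+1)) : ℝ := min 1 (2 * (1 - ‖z.1‖))

lemma tauR_mem {n : ℕ} (z : gDisk (n+1)) : tauR z ∈ unitInterval := by
  constructor
  · exact le_min zero_le_one (by nlinarith [gDisk_norm_le z])
  · exact min_le_left _ _

/-- `R`: retract the ball onto the cylinder. -/
def RmapR (n : ℕ) : gDisk (n+1) → gDisk n × unitInterval :=
  fun z => (clampBall ((1 - tauR z / 2)⁻¹ • einit z.1), ⟨tauR z, tauR_mem z⟩)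

lemma continuous_smapR (n : ℕ) : Continuous (smapR n) :=
  Continuous.subtype_mk (continuous_hemi.comp continuous_fst) _

lemma continuous_rmapR (n : ℕ) : Continuous (rmapR n) :=
  Continuous.prodMk
    (Continuous.subtype_mk (continuous_einit.comp continuous_subtype_val) _)
    continuous_const

lemma continuous_SmapR (n : ℕ) : Continuous (SmapR n) := by
  apply Continuous.subtype_mk
  apply Continuous.fun_smul
  · exact continuous_const.sub ((continuous_subtype_val.comp continuous_snd).div_const 2)
  · exact continuous_hemi.comp continuous_fst

lemma continuous_tauR {n : ℕ} : Continuous (tauR (n := n)) := by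
  apply continuous_const.min
  exact continuous_const.mul (continuous_const.sub (continuous_subtype_val.norm))

lemma continuous_RmapR (n : ℕ) : Continuous (RmapR n) := by
  apply Continuous.prodMk
  · have h1 : Continuous fun z : gDisk (n+1) => (1 - tauR z / 2)⁻¹ • einit z.1 := by
      apply Continuous.fun_smul
      · apply Continuous.inv₀ (continuous_const.sub (continuous_tauR.div_const 2))
        intro z
        have := (tauR_mem z).2
        intro hc
        have : (1:ℝ) - tauR z / 2 ≥ 1/2 := by linarith
        linarith [show (1:ℝ) - tauR z / 2 = 0 from hc]
      · exact continuous_einit.comp continuous_subtype_val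
    exact Continuous.subtype_mk (continuous_clampBall.comp h1) _
  · exact Continuous.subtype_mk continuous_tauR _

end Retract
section RetractIds

lemma rmap_smap (n : ℕ) (p : gDisk n × zeroSpace) : rmapR n (smapR n p) = p := by
  obtain ⟨x, t⟩ := p
  refine Prod.ext ?_ ?_
  · apply Subtype.ext
    show einit (hemi x) = x.1
    rw [hemi, einit_esnoc]
  · apply Subtype.ext
    have ht : t.1 = 0 := t.2
    exact ht.symm

lemma S_cyl (n : ℕ) (p : gDisk n × zeroSpace) :
    SmapR n (cylIncl n p) = sphereIncl (n+1) (smapR n p) := by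
  apply Subtype.ext
  show (1 - p.2.1 / 2) • hemi p.1 = hemi p.1
  have ht : p.2.1 = 0 := p.2.2
  rw [ht]
  norm_num

lemma R_sph (n : ℕ) (z : gSphere (n+1)) :
    RmapR n (sphereIncl (n+1) z) = cylIncl n (rmapR n z) := by
  have hn : ‖z.1‖ = 1 := gSphere_norm_eq z
  have ht : tauR (sphereIncl (n+1) z) = 0 := by
    show min 1 (2 * (1 - ‖z.1‖)) = 0
    rw [hn]; norm_num
  refine Prod.ext ?_ ?_
  · apply Subtype.ext
    show (clampBall ((1 - tauR (sphereIncl (n+1) z) / 2)⁻¹ • einit z.1)).1 = einit z.1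
    rw [ht]
    norm_num
    exact clampBall_of_le _ ((norm_einit_le z.1).trans (le_of_eq hn))
  · exact Subtype.ext ht

lemma R_S (n : ℕ) (p : gDisk n × unitInterval) : RmapR n (SmapR n p) = p := by
  obtain ⟨x, u⟩ := p
  have hu0 := u.2.1
  have hu1 := u.2.2
  have hnorm : ‖(SmapR n (x, u)).1‖ = 1 - u.1 / 2 := by
    show ‖(1 - u.1 / 2) • hemi x‖ = _
    rw [norm_smul, norm_hemi, mul_one, Real.norm_eq_abs, abs_of_nonneg (by linarith)]
  have ht : tauR (SmapR n (x, u)) = u.1 := by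
    unfold tauR
    rw [hnorm]
    have h2 : 2 * (1 - (1 - u.1 / 2)) = u.1 := by ring
    rw [h2]
    exact min_eq_right hu1
  refine Prod.ext ?_ ?_
  · apply Subtype.ext
    show (clampBall ((1 - tauR (SmapR n (x, u)) / 2)⁻¹ •
      einit ((1 - u.1 / 2) • hemi x))).1 = x.1
    rw [ht, einit_smul, hemi, einit_esnoc, smul_smul,
      inv_mul_cancel₀ (by linarith : (1:ℝ) - u.1 / 2 ≠ 0), one_smul,
      clampBall_of_le _ (gDisk_norm_le x)]
  · exact Subtype.ext ht

lemma toplift_cylIncl {X Y : DFlow} (f : X ⟶ Y)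
    (H : ∀ (m : ℕ) (a b : X.States), TopLift (sphereIncl m) (fun p : X.Path a b => f.map p))
    (n : ℕ) (a b : X.States) : TopLift (cylIncl n) (fun p : X.Path a b => f.map p) :=
  TopLift.of_retract (smapR n) (rmapR n) (SmapR n) (RmapR n)
    (continuous_smapR n) (continuous_rmapR n) (continuous_SmapR n) (continuous_RmapR n)
    (rmap_smap n) (R_S n) (S_cyl n) (R_sph n) (H (n+1) a b)

end RetractIds
section FlowLevel

lemma continuous_of_subsingleton' {α β : Type} [TopologicalSpace α] [TopologicalSpace β]
    [Subsingleton α] (f : α → β) : Continuous f := by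
  rcases isEmpty_or_nonempty α with h | h
  · exact continuous_of_isEmpty h f
  · obtain ⟨a⟩ := h
    have : f = fun _ => f a := funext fun x => by rw [Subsingleton.elim x a]
    rw [this]; exact continuous_const

instance : Subsingleton (EuclideanSpace ℝ (Fin 0)) :=
  ⟨fun a b => (WithLp.ext_iff 2).mpr (funext fun i => Fin.elim0 i)⟩

instance : Subsingleton (gDisk 0) := ⟨fun a b => Subtype.ext (Subsingleton.elim _ _)⟩

lemma gSphere_zero_empty : IsEmpty (gSphere 0) := by
  constructor
  intro z
  have h := gSphere_norm_eq z
  have h0 : z.1 = 0 := Subsingleton.elim _ _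
  rw [h0, norm_zero] at h
  exact zero_ne_one h

/-- The unique point of `D^0`. -/
def d0 : gDisk 0 := ⟨0, Metric.mem_closedBall_self zero_le_one⟩

/-- Surjectivity on states of a map with RLP wrt `C`. -/
lemma states_surj {X Y : DFlow} (f : X ⟶ Y) (hf : rlpClass IglC f) :
    ∀ y : Y.States, ∃ x : X.States, f.toFun x = y := by
  intro y
  have hC : HasLiftingProperty Cmap f := hf Cmap (Or.inr ⟨rfl, rfl, HEq.rfl⟩)
  have sq : CommSq (X.fromEmpty) Cmap f
      ⟨fun _ => y, fun p => p.elim,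
        fun _ _ => continuous_of_isEmpty (inferInstanceAs (IsEmpty Empty)) _,
        fun p _ => p.elim⟩ := by
    constructor
    apply FlowHom.ext'
    · intro s; exact s.elim
    · intro a b p; exact a.elim
  obtain ⟨⟨l⟩⟩ := hC.sq_hasLift sq
  exact ⟨l.l.toFun PUnit.unit, FlowHom.congr_toFun l.fac_right PUnit.unit⟩

/-- The topological lifting property wrt all spheres, for each path-space map. -/
lemma sphere_toplift {X Y : DFlow} (f : X ⟶ Y) (hf : rlpClass IglC f) :
    ∀ (m : ℕ) (a b : X.States), TopLift (sphereIncl m) (fun p : X.Path a b => f.map p) :=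
  fun m a b => glob_lift_exists
    (hf (cFlow m) (Or.inl ⟨m, rfl, rfl, HEq.rfl⟩)) a b

/-- Surjectivity on path spaces of a map with RLP wrt `c₀`. -/
lemma paths_surj {X Y : DFlow} (f : X ⟶ Y) (hf : rlpClass IglC f) :
    ∀ (a b : X.States) (q : Y.Path (f.toFun a) (f.toFun b)),
      ∃ p : X.Path a b, f.map p = q := by
  intro a b q
  have h0 := sphere_toplift f hf 0 a b
  obtain ⟨w, _, _, hw2⟩ := h0 (fun z => (gSphere_zero_empty.false z).elim) (fun _ => q)
    (continuous_of_isEmpty gSphere_zero_empty _) (continuous_of_subsingleton' _)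
    (fun z => (gSphere_zero_empty.false z).elim)
  exact ⟨w d0, hw2 d0⟩

lemma wbar_of_rlp {X Y : DFlow} (f : X ⟶ Y) (hf : rlpClass IglC f) : WbarDK f := by
  have surj := states_surj f hf
  have psurj := paths_surj f hf
  rcases isEmpty_or_nonempty X.States with hX | hX
  · left
    refine ⟨hX, ?_⟩
    constructor
    intro y
    obtain ⟨x, _⟩ := surj y
    exact hX.false x
  · right
    by_cases hP : X.HasExecPath
    · right
      refine ⟨hP, ?_⟩
      obtain ⟨a, b, ⟨p⟩⟩ := hP
      exact ⟨_, _, ⟨f.map p⟩⟩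
    · left
      have hset : X.IsSetFlow := by
        intro a b
        by_contra h
        rw [not_isEmpty_iff] at h
        exact hP ⟨a, b, h⟩
      obtain ⟨x0⟩ := hX
      refine ⟨⟨x0⟩, ⟨f.toFun x0⟩, hset, ?_⟩
      intro α β
      constructor
      intro q
      obtain ⟨a, ha⟩ := surj α
      obtain ⟨b, hb⟩ := surj β
      subst ha; subst hb
      obtain ⟨p, _⟩ := psurj a b q
      exact (hset a b).false p

end FlowLevel
section Lifts

lemma lift_Cplus {X Y : DFlow} (f : X ⟶ Y) (hf : rlpClass IglC f) :
    HasLiftingProperty Cplus f := by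
  have surj := states_surj f hf
  constructor
  intro top bottom sq
  obtain ⟨x1, hx1⟩ := surj (bottom.toFun true)
  constructor; constructor
  refine ⟨⟨fun s => cond s x1 (top.toFun PUnit.unit), fun {α β} p => p.elim,
    fun α β => continuous_of_isEmpty (inferInstanceAs (IsEmpty Empty)) _,
    fun {α β γ} p _ => p.elim⟩, ?_, ?_⟩
  · apply FlowHom.ext'
    · intro s; cases s; rfl
    · intro a b p; exact p.elim
  · apply FlowHom.ext'
    · intro s
      cases s
      · exact FlowHom.congr_toFun sq.w PUnit.unit
      · exact hx1
    · intro a b p; exact p.elim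

end Lifts
section LiftC0

lemma lift_cZeroPlus {X Y : DFlow} (f : X ⟶ Y) (hf : rlpClass IglC f) :
    HasLiftingProperty cZeroPlus f := by
  have psurj := paths_surj f hf
  constructor
  intro top bottom sq
  have es : ∀ s, f.toFun (top.toFun s) = bottom.toFun (Sum.map id id s) :=
    fun s => FlowHom.congr_toFun sq.w s
  have e2 : f.toFun (top.toFun (Sum.inr false)) = bottom.toFun (Sum.inr false) :=
    es (Sum.inr false)
  have e3 : f.toFun (top.toFun (Sum.inr true)) = bottom.toFun (Sum.inr true) :=
    es (Sum.inr true)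
  obtain ⟨q, hq⟩ := psurj _ _ (pathCast e2.symm e3.symm
    (bottom.map (show (Iseg.sum (DFlow.glob (gDisk 0))).Path (Sum.inr false) (Sum.inr true)
      from d0)))
  constructor; constructor
  refine ⟨⟨fun s => top.toFun s,
    fun {α β} p =>
      match α, β, p with
      | .inl a, .inl b, p =>
          top.map (show (Iseg.sum (DFlow.glob (gSphere 0))).Path (.inl a) (.inl b) from p)
      | .inr false, .inr true, _ => q
      | .inr false, .inr false, p => p.elim
      | .inr true, .inr false, p => p.elim
      | .inr true, .inr true, p => p.elim
      | .inl _, .inr _, p => p.elim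
      | .inr _, .inl _, p => p.elim,
    fun α β =>
      match α, β with
      | .inl a, .inl b => top.continuous_map (.inl a) (.inl b)
      | .inr false, .inr true => @continuous_const _ _ (DFlow.str _ _ _) (DFlow.str _ _ _) q
      | .inr false, .inr false => @continuous_of_isEmpty _ _ (DFlow.str _ _ _) (DFlow.str _ _ _) (inferInstanceAs (IsEmpty Empty)) _
      | .inr true, .inr false => @continuous_of_isEmpty _ _ (DFlow.str _ _ _) (DFlow.str _ _ _) (inferInstanceAs (IsEmpty Empty)) _
      | .inr true, .inr true => @continuous_of_isEmpty _ _ (DFlow.str _ _ _) (DFlow.str _ _ _) (inferInstanceAs (IsEmpty Empty)) _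
      | .inl _, .inr _ => @continuous_of_isEmpty _ _ (DFlow.str _ _ _) (DFlow.str _ _ _) (inferInstanceAs (IsEmpty Empty)) _
      | .inr _, .inl _ => @continuous_of_isEmpty _ _ (DFlow.str _ _ _) (DFlow.str _ _ _) (inferInstanceAs (IsEmpty Empty)) _,
    fun {α β γ} x y =>
      match α, β, γ, x, y with
      | .inl false, .inl false, _, x, _ => x.elim
      | .inl true, .inl false, _, x, _ => x.elim
      | .inl true, .inl true, _, x, _ => x.elim
      | .inl false, .inl true, .inl false, _, y => y.elim
      | .inl false, .inl true, .inl true, _, y => y.elim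
      | .inl false, .inl true, .inr _, _, y => y.elim
      | .inr false, .inr false, _, x, _ => x.elim
      | .inr true, .inr false, _, x, _ => x.elim
      | .inr true, .inr true, _, x, _ => x.elim
      | .inr false, .inr true, .inr false, _, y => y.elim
      | .inr false, .inr true, .inr true, _, y => y.elim
      | .inr false, .inr true, .inl _, _, y => y.elim
      | .inl _, .inr _, _, x, _ => x.elim
      | .inr _, .inl _, _, x, _ => x.elim⟩, ?_, ?_⟩
  · apply FlowHom.ext'
    · intro s; cases s <;> rfl
    · intro α β p
      match α, β, p with
      | .inl false, .inl true, p => exact HEq.rfl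
      | .inl false, .inl false, p => exact p.elim
      | .inl true, .inl false, p => exact p.elim
      | .inl true, .inl true, p => exact p.elim
      | .inr false, .inr true, p => exact (gSphere_zero_empty.false p).elim
      | .inr false, .inr false, p => exact p.elim
      | .inr true, .inr false, p => exact p.elim
      | .inr true, .inr true, p => exact p.elim
      | .inl _, .inr _, p => exact p.elim
      | .inr _, .inl _, p => exact p.elim
  · apply FlowHom.ext'
    · intro s
      cases s with
      | inl a => exact es (.inl a)
      | inr b => exact es (.inr b)
    · intro α β p
      match α, β, p with
      | .inl false, .inl true, p =>
        exact FlowHom.congr_map sq.w (.inl false) (.inl true) p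
      | .inl false, .inl false, p => exact p.elim
      | .inl true, .inl false, p => exact p.elim
      | .inl true, .inl true, p => exact p.elim
      | .inr false, .inr true, p =>
        haveI : Subsingleton ((Iseg.sum (DFlow.glob (gDisk 0))).Path
            (Sum.inr false) (Sum.inr true)) := inferInstanceAs (Subsingleton (gDisk 0))
        have hd : p = (show (Iseg.sum (DFlow.glob (gDisk 0))).Path (Sum.inr false)
            (Sum.inr true) from d0) := Subsingleton.elim _ _
        rw [hd]
        exact (heq_of_eq hq).trans (pathCast_heq e2.symm e3.symm _)
      | .inr false, .inr false, p => exact p.elim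
      | .inr true, .inr false, p => exact p.elim
      | .inr true, .inr true, p => exact p.elim
      | .inl _, .inr _, p => exact p.elim
      | .inr _, .inl _, p => exact p.elim

end LiftC0
/-- every map of flows with the right lifting property with respect to
all maps of `I^gl ∪ {C}` belongs to `W̄_DK` and has the right lifting property with
respect to all maps of `{C⁺, c₀⁺} ∪ J^gl ∪ I^gl_{≥1}`:
`inj(I^gl ∪ {C}) ⊆ W̄_DK ∩ inj({C⁺, c₀⁺} ∪ J^gl ∪ I^gl_{≥1})`. -/
theorem inj_subset_Wbar_inter_inj {X Y : DFlow} (f : X ⟶ Y) (hf : rlpClass IglC f) :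
    WbarDK f ∧ rlpClass TrivCofGen f := by
  refine ⟨wbar_of_rlp f hf, ?_⟩
  intro A B i hi
  rcases hi with h | h | h | h
  · obtain ⟨hA, hB, hi⟩ := h
    subst hA; subst hB
    have hi' : i = Cplus := eq_of_heq hi
    subst hi'
    exact lift_Cplus f hf
  · obtain ⟨hA, hB, hi⟩ := h
    subst hA; subst hB
    have hi' : i = cZeroPlus := eq_of_heq hi
    subst hi'
    exact lift_cZeroPlus f hf
  · obtain ⟨n, hA, hB, hi⟩ := h
    subst hA; subst hB
    have hi' : i = jFlow n := eq_of_heq hi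
    subst hi'
    exact hasLiftingProperty_globMap (fun a b => toplift_cylIncl f (sphere_toplift f hf) n a b)
  · obtain ⟨n, _, hA, hB, hi⟩ := h
    subst hA; subst hB
    have hi' : i = cFlow n := eq_of_heq hi
    subst hi'
    exact hf (cFlow n) (Or.inl ⟨n, rfl, rfl, HEq.rfl⟩)
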